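/- Erdős–Rényi connectivity threshold: for any fixed ω > 0, if ε > (1+ω)·ln(n)/n, then the probability that G(n, ε) is connected tends to 1 as n → ∞. -/

import Mathlib

open MeasureTheory ENNReal Filter

noncomputable section

/-- Potential edges of a graph on `Fin n`: non-diagonal unordered pairs. -/
def EdgeSlots (n : ℕ) : Type := {e : Sym2 (Fin n) // ¬ e.IsDiag}

instance (n : ℕ) : Fintype (EdgeSlots n) := by unfold EdgeSlots; infer_instance

/-- The graph determined by a choice of present edges. -/
def graphOf {n : ℕ} (ω : EdgeSlots n → Bool) : SimpleGraph (Fin n) where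
  Adj i j := ∃ h : i ≠ j, ω ⟨s(i, j), by simpa using h⟩ = true
  symm := by
    constructor
    rintro i j ⟨h, hw⟩
    refine ⟨h.symm, ?_⟩
    have : (⟨s(j, i), by simpa using h.symm⟩ : EdgeSlots n)
        = ⟨s(i, j), by simpa using h⟩ := Subtype.ext (Sym2.eq_swap)
    rw [this]; exact hw
  loopless := by constructor; rintro i ⟨h, _⟩; exact h rfl

/-- The Erdős–Rényi measure `G(n, ε)`. -/
def gnp (n : ℕ) (ε : ℝ≥0∞) (hε : ε ≤ 1) : Measure (EdgeSlots n → Bool) :=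
  Measure.pi fun _ => (PMF.ofFintype (fun b => cond b ε (1 - ε)) (by simp [hε])).toMeasure

instance (n : ℕ) : DecidableEq (EdgeSlots n) := by unfold EdgeSlots; exact Subtype.instDecidableEq

instance (n : ℕ) (ε : ℝ≥0∞) (hε : ε ≤ 1) : IsProbabilityMeasure (gnp n ε hε) := by
  unfold gnp; infer_instance

lemma meas_all {n : ℕ} (s : Set (EdgeSlots n → Bool)) : MeasurableSet s :=
  s.toFinite.measurableSet

lemma gnp_cyl {n : ℕ} (ε : ℝ≥0∞) (hε : ε ≤ 1) (T : Finset (EdgeSlots n)) :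
    gnp n ε hε {ω | ∀ e ∈ T, ω e = false} = (1 - ε) ^ T.card := by
  have hset : {ω : EdgeSlots n → Bool | ∀ e ∈ T, ω e = false}
      = Set.pi Set.univ (fun e => if e ∈ T then {false} else Set.univ) := by
    ext ω
    simp only [Set.mem_setOf_eq, Set.mem_pi, Set.mem_univ, forall_true_left]
    constructor
    · intro h e; by_cases he : e ∈ T <;> simp [he, h e]
    · intro h e he; have := h e; simpa [he] using this
  rw [gnp, hset, Measure.pi_pi]
  have : ∀ e : EdgeSlots n, (PMF.ofFintype (fun b => cond b ε (1 - ε)) (by simp [hε])).toMeasure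
      (if e ∈ T then {false} else Set.univ) = if e ∈ T then (1 - ε) else 1 := by
    intro e
    by_cases he : e ∈ T <;> simp [he, PMF.toMeasure_apply_singleton _ _ (measurableSet_singleton _),
      PMF.ofFintype_apply]
    exact add_tsub_cancel_of_le hε
  simp_rw [this]
  rw [Finset.prod_ite, Finset.prod_const, Finset.prod_const, one_pow, mul_one]
  congr 1
  simp [Finset.filter_mem_eq_inter]

def crossing {n : ℕ} (S : Finset (Fin n)) : Finset (EdgeSlots n) :=
  Finset.univ.filter (fun e => ∃ i j, i ∈ S ∧ j ∉ S ∧ e.1 = s(i, j))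

lemma card_crossing_ge {n : ℕ} (S : Finset (Fin n)) (hi₀ : S.Nonempty)
    (hj₀ : Sᶜ.Nonempty) : S.card * (n - S.card) ≤ (crossing S).card := by
  obtain ⟨i₀, hi₀⟩ := hi₀
  obtain ⟨j₀, hj₀⟩ := hj₀
  rw [Finset.mem_compl] at hj₀
  have hne₀ : i₀ ≠ j₀ := fun h => hj₀ (h ▸ hi₀)
  have hcard : (S ×ˢ Sᶜ).card = S.card * (n - S.card) := by
    rw [Finset.card_product, Finset.card_compl, Fintype.card_fin]
  rw [← hcard]
  refine Finset.card_le_card_of_injOn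
    (fun x => if h : x.1 ≠ x.2 then ⟨s(x.1, x.2), by simpa using h⟩
      else ⟨s(i₀, j₀), by simpa using hne₀⟩) ?_ ?_
  · rintro ⟨i, j⟩ hx
    rw [Finset.mem_coe, Finset.mem_product] at hx
    obtain ⟨hiS, hjS⟩ := hx
    rw [Finset.mem_compl] at hjS
    have hij : i ≠ j := fun h => hjS (h ▸ hiS)
    refine Finset.mem_filter.2 ⟨Finset.mem_univ _, i, j, hiS, hjS, ?_⟩
    beta_reduce
    have hd : (if h : i ≠ j then (⟨s(i, j), by simpa using h⟩ : {e : Sym2 (Fin n) // ¬ e.IsDiag})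
        else ⟨s(i₀, j₀), by simpa using hne₀⟩) = ⟨s(i, j), by simpa using hij⟩ := dif_pos hij
    exact congrArg Subtype.val hd
  · rintro ⟨i, j⟩ hx ⟨i', j'⟩ hx' heq
    rw [Finset.mem_coe, Finset.mem_product, Finset.mem_compl] at hx hx'
    have hij : i ≠ j := fun h => hx.2 (h ▸ hx.1)
    have hij' : i' ≠ j' := fun h => hx'.2 (h ▸ hx'.1)
    beta_reduce at heq
    have hd : (if h : i ≠ j then (⟨s(i, j), by simpa using h⟩ : {e : Sym2 (Fin n) // ¬ e.IsDiag})
        else ⟨s(i₀, j₀), by simpa using hne₀⟩) = ⟨s(i, j), by simpa using hij⟩ := dif_pos hij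
    have hd' : (if h : i' ≠ j' then (⟨s(i', j'), by simpa using h⟩ : {e : Sym2 (Fin n) // ¬ e.IsDiag})
        else ⟨s(i₀, j₀), by simpa using hne₀⟩) = ⟨s(i', j'), by simpa using hij'⟩ := dif_pos hij'
    replace heq := hd.symm.trans (heq.trans hd')
    have : s(i, j) = s(i', j') := congrArg Subtype.val heq
    rw [Sym2.eq_iff] at this
    rcases this with ⟨h1, h2⟩ | ⟨h1, h2⟩
    · simp [Prod.ext_iff, h1, h2]
    · exact absurd (h1 ▸ hx.1) (h2 ▸ hx'.2)

lemma crossing_false_of_not_connected {n : ℕ} (hn : 1 ≤ n) (ω : EdgeSlots n → Bool)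
    (h : ¬ (graphOf ω).Connected) :
    ∃ S : Finset (Fin n), S.Nonempty ∧ 2 * S.card ≤ n ∧ ∀ e ∈ crossing S, ω e = false := by
  have hne : Nonempty (Fin n) := ⟨⟨0, hn⟩⟩
  rw [SimpleGraph.connected_iff] at h
  have hpre : ¬ (graphOf ω).Preconnected := fun hp => h ⟨hp, hne⟩
  unfold SimpleGraph.Preconnected at hpre
  push_neg at hpre
  obtain ⟨u, w, huw⟩ := hpre
  set G := graphOf ω
  classical
  set S₀ : Finset (Fin n) := Finset.univ.filter (fun x => G.Reachable u x) with hS₀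
  have hmem : ∀ x, x ∈ S₀ ↔ G.Reachable u x := by
    intro x; simp [hS₀]
  have hu : u ∈ S₀ := (hmem u).2 (SimpleGraph.Reachable.refl u)
  have hw : w ∉ S₀ := fun hw => huw ((hmem w).1 hw)
  -- no crossing edge of S₀ is present
  have hcross : ∀ T : Finset (Fin n),
      (∀ i j, i ∈ T → j ∉ T → ¬ G.Adj i j) → ∀ e ∈ crossing T, ω e = false := by
    intro T hT e he
    rw [crossing, Finset.mem_filter] at he
    obtain ⟨-, i, j, hiT, hjT, hee⟩ := he
    by_contra hωe
    rw [Bool.not_eq_false] at hωe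
    have hij : i ≠ j := by
      intro hh; apply e.2; rw [hee, hh]; exact Sym2.mk_isDiag_iff.2 rfl
    have : G.Adj i j := ⟨hij, by
      have : e = ⟨s(i,j), by simpa using hij⟩ := Subtype.ext hee
      rw [← this]; exact hωe⟩
    exact hT i j hiT hjT this
  have hadj₀ : ∀ i j, i ∈ S₀ → j ∉ S₀ → ¬ G.Adj i j := by
    intro i j hi hj hadj
    exact hj ((hmem j).2 (((hmem i).1 hi).trans hadj.reachable))
  have hadj₀' : ∀ i j, i ∈ S₀ᶜ → j ∉ S₀ᶜ → ¬ G.Adj i j := by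
    intro i j hi hj hadj
    rw [Finset.mem_compl] at hi
    rw [Finset.mem_compl, not_not] at hj
    exact hadj₀ j i hj hi hadj.symm
  by_cases hsize : 2 * S₀.card ≤ n
  · exact ⟨S₀, ⟨u, hu⟩, hsize, hcross S₀ hadj₀⟩
  · refine ⟨S₀ᶜ, ⟨w, Finset.mem_compl.2 hw⟩, ?_, hcross S₀ᶜ hadj₀'⟩
    rw [Finset.card_compl, Fintype.card_fin]
    omega

def badSets (n : ℕ) : Finset (Finset (Fin n)) :=
  Finset.univ.filter (fun S => S.Nonempty ∧ 2 * S.card ≤ n)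

lemma gnp_not_conn_le {n : ℕ} (hn : 1 ≤ n) (ε : ℝ≥0∞) (hε : ε ≤ 1) (c : ℝ)
    (hc0 : 0 ≤ c) (hc1 : ENNReal.ofReal c < ε) :
    gnp n ε hε {ω | ¬ (graphOf ω).Connected}
      ≤ ENNReal.ofReal (∑ S ∈ badSets n, (1 - c) ^ (S.card * (n - S.card))) := by
  have hc1' : c < 1 := by
    have : ENNReal.ofReal c < 1 := lt_of_lt_of_le hc1 hε
    rwa [ENNReal.ofReal_lt_one] at this
  have hsub : {ω : EdgeSlots n → Bool | ¬ (graphOf ω).Connected}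
      ⊆ ⋃ S ∈ badSets n, {ω | ∀ e ∈ crossing S, ω e = false} := by
    intro ω hω
    obtain ⟨S, h1, h2, h3⟩ := crossing_false_of_not_connected hn ω hω
    exact Set.mem_biUnion (Finset.mem_filter.2 ⟨Finset.mem_univ _, h1, h2⟩) h3
  calc gnp n ε hε {ω | ¬ (graphOf ω).Connected}
      ≤ gnp n ε hε (⋃ S ∈ badSets n, {ω | ∀ e ∈ crossing S, ω e = false}) :=
        measure_mono hsub
    _ ≤ ∑ S ∈ badSets n, gnp n ε hε {ω | ∀ e ∈ crossing S, ω e = false} :=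
        measure_biUnion_finset_le _ _
    _ ≤ ∑ S ∈ badSets n, ENNReal.ofReal ((1 - c) ^ (S.card * (n - S.card))) := by
        refine Finset.sum_le_sum fun S hS => ?_
        rw [gnp_cyl]
        obtain ⟨-, h1, h2⟩ := Finset.mem_filter.1 hS
        have hcomp : Sᶜ.Nonempty := by
          rw [← Finset.card_pos, Finset.card_compl, Fintype.card_fin]
          have := Finset.card_pos.2 h1
          omega
        have hcard := card_crossing_ge S h1 hcomp
        have hbase : 1 - ε ≤ ENNReal.ofReal (1 - c) := by
          rw [ENNReal.ofReal_sub _ hc0, ENNReal.ofReal_one]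
          exact tsub_le_tsub_left hc1.le 1
        calc (1 - ε) ^ (crossing S).card
            ≤ (ENNReal.ofReal (1 - c)) ^ (crossing S).card := pow_le_pow_left' hbase _
          _ = ENNReal.ofReal ((1 - c) ^ (crossing S).card) := by
              rw [ENNReal.ofReal_pow (by linarith)]
          _ ≤ ENNReal.ofReal ((1 - c) ^ (S.card * (n - S.card))) := by
              apply ENNReal.ofReal_le_ofReal
              exact pow_le_pow_of_le_one (by linarith) (by linarith) hcard
    _ = ENNReal.ofReal (∑ S ∈ badSets n, (1 - c) ^ (S.card * (n - S.card))) := by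
        rw [ENNReal.ofReal_sum_of_nonneg]
        intro S hS
        exact pow_nonneg (by linarith) _

lemma R_le (ω : ℝ) (hω : 0 < ω) (n : ℕ) (hn : 2 ≤ n)
    (hc : (1 + ω) * Real.log n / n ≤ 1) :
    ∑ S ∈ badSets n, (1 - (1 + ω) * Real.log n / n) ^ (S.card * (n - S.card))
      ≤ (Real.exp (Real.exp (-(ω/2) * Real.log n)) - 1)
        + 2 ^ n * Real.exp (-(ω/4) * (n * Real.log n)) := by
  have hN0 : (0:ℝ) < n := by
    have : (2:ℝ) ≤ n := by exact_mod_cast hn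
    linarith
  have hL0 : (0:ℝ) ≤ Real.log n := Real.log_nonneg (by exact_mod_cast hn.trans' one_le_two)
  set L := Real.log (n:ℝ) with hLdef
  set N := (n:ℝ) with hNdef
  set c := (1 + ω) * L / N with hcdef
  set δ := ω / (2 * (1 + ω)) with hδdef
  set x := Real.exp (-((1 + ω/2) * L)) with hxdef
  set t := Real.exp (-(ω/4) * (N * L)) with htdef
  have hω1 : (0:ℝ) < 1 + ω := by linarith
  have hδ0 : 0 < δ := by rw [hδdef]; positivity
  have hc0 : 0 ≤ c := div_nonneg (mul_nonneg hω1.le hL0) hN0.le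
  have h1c0 : 0 ≤ 1 - c := by linarith
  have hec : 1 - c ≤ Real.exp (-c) := by
    have := Real.add_one_le_exp (-c); linarith
  have hpow : ∀ m : ℕ, (1 - c) ^ m ≤ Real.exp (-(c * m)) := by
    intro m
    calc (1 - c) ^ m ≤ (Real.exp (-c)) ^ m := pow_le_pow_left₀ h1c0 hec m
      _ = Real.exp (-(c * m)) := by rw [← Real.exp_nat_mul]; congr 1; ring
  have hx0 : 0 ≤ x := (Real.exp_pos _).le
  have ht0 : 0 ≤ t := (Real.exp_pos _).le
  -- small regime
  have hsmall_bound : ∀ S ∈ (badSets n).filter (fun S => (S.card : ℝ) ≤ δ * N),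
      (1 - c) ^ (S.card * (n - S.card)) ≤ x ^ S.card := by
    intro S hS
    rw [Finset.mem_filter, badSets, Finset.mem_filter] at hS
    obtain ⟨⟨-, hne, hk2⟩, hkδ⟩ := hS
    have hk1 : 1 ≤ S.card := hne.card_pos
    have hkn : S.card ≤ n := by omega
    have hK0 : (0:ℝ) ≤ S.card := Nat.cast_nonneg _
    refine le_trans (hpow _) ?_
    have hxk : x ^ S.card = Real.exp ((S.card : ℝ) * (-((1 + ω/2) * L))) :=
      (Real.exp_nat_mul _ _).symm
    rw [hxk, Real.exp_le_exp]
    have hm : ((S.card * (n - S.card) : ℕ) : ℝ) = (S.card : ℝ) * (N - S.card) := by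
      rw [Nat.cast_mul, Nat.cast_sub hkn]
    rw [hm]
    have hNK : (1 - δ) * N ≤ N - S.card := by nlinarith
    have hδ1 : (1 + ω) * (1 - δ) = 1 + ω/2 := by
      rw [hδdef]; field_simp; ring
    have expand : c * ((S.card : ℝ) * (N - S.card)) = (1 + ω) * L * ((S.card : ℝ) * (N - S.card)) / N := by
      rw [hcdef]; ring
    have h1 : (1 + ω/2) * L * (S.card : ℝ) * N = ((1 + ω) * L * S.card) * ((1 - δ) * N) := by
      rw [← hδ1]; ring
    have h2 : ((1 + ω) * L * S.card) * ((1 - δ) * N) ≤ ((1 + ω) * L * S.card) * (N - S.card) :=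
      mul_le_mul_of_nonneg_left hNK (by positivity)
    have h3 : ((1 + ω) * L * S.card) * (N - S.card) = (1 + ω) * L * ((S.card : ℝ) * (N - S.card)) := by
      ring
    have key : (1 + ω/2) * L * (S.card : ℝ) ≤ c * ((S.card : ℝ) * (N - S.card)) := by
      rw [expand, le_div_iff₀ hN0]
      linarith
    linarith
  -- large regime
  have hlarge_bound : ∀ S ∈ (badSets n).filter (fun S => ¬ ((S.card : ℝ) ≤ δ * N)),
      (1 - c) ^ (S.card * (n - S.card)) ≤ t := by
    intro S hS
    rw [Finset.mem_filter, badSets, Finset.mem_filter] at hS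
    obtain ⟨⟨-, hne, hk2⟩, hkδ⟩ := hS
    push_neg at hkδ
    have hkn : S.card ≤ n := by omega
    have hK0 : (0:ℝ) ≤ S.card := Nat.cast_nonneg _
    have h2k : 2 * (S.card : ℝ) ≤ N := by rw [hNdef]; exact_mod_cast hk2
    refine le_trans (hpow _) ?_
    rw [htdef, Real.exp_le_exp]
    have hm : ((S.card * (n - S.card) : ℕ) : ℝ) = (S.card : ℝ) * (N - S.card) := by
      rw [Nat.cast_mul, Nat.cast_sub hkn]
    rw [hm]
    have hprod : δ * N * (N / 2) ≤ (S.card : ℝ) * (N - S.card) :=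
      mul_le_mul hkδ.le (by linarith) (by positivity) hK0
    have expand : c * ((S.card : ℝ) * (N - S.card)) = (1 + ω) * L * ((S.card : ℝ) * (N - S.card)) / N := by
      rw [hcdef]; ring
    have heq : (ω/4) * (N * L) = (1 + ω) * L * (δ * N * (N / 2)) / N := by
      rw [hδdef]; field_simp; ring
    have hle : (1 + ω) * L * (δ * N * (N / 2)) / N ≤ (1 + ω) * L * ((S.card : ℝ) * (N - S.card)) / N := by
      gcongr
    have key : (ω/4) * (N * L) ≤ c * ((S.card : ℝ) * (N - S.card)) := by
      rw [heq, expand]; exact hle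
    linarith
  rw [← Finset.sum_filter_add_sum_filter_not (badSets n) (fun S => (S.card : ℝ) ≤ δ * N)]
  have bound1 : ∑ S ∈ (badSets n).filter (fun S => (S.card : ℝ) ≤ δ * N),
      (1 - c) ^ (S.card * (n - S.card)) ≤ Real.exp (Real.exp (-(ω/2) * L)) - 1 := by
    have hsub : (badSets n).filter (fun S => (S.card : ℝ) ≤ δ * N) ⊆ Finset.univ.erase ∅ := by
      intro S hS
      rw [Finset.mem_filter, badSets, Finset.mem_filter] at hS
      exact Finset.mem_erase.2 ⟨hS.1.2.1.ne_empty, Finset.mem_univ _⟩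
    have hbinom : ∑ S : Finset (Fin n), x ^ S.card = (x + 1) ^ n := by
      have h := Fintype.prod_add (fun _ : Fin n => x) (fun _ : Fin n => (1:ℝ))
      simp [Finset.prod_const] at h
      rw [← h]
    have herase : ∑ S ∈ Finset.univ.erase (∅ : Finset (Fin n)), x ^ S.card = (x + 1) ^ n - 1 := by
      have h2 := Finset.add_sum_erase Finset.univ (fun S : Finset (Fin n) => x ^ S.card)
        (Finset.mem_univ ∅)
      simp only [Finset.card_empty, pow_zero] at h2
      rw [← hbinom]
      linarith
    have hNx : N * x = Real.exp (-(ω/2) * L) := by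
      rw [hxdef, ← Real.exp_log hN0, ← hLdef, ← Real.exp_add]
      congr 1; ring
    calc ∑ S ∈ (badSets n).filter (fun S => (S.card : ℝ) ≤ δ * N),
        (1 - c) ^ (S.card * (n - S.card))
        ≤ ∑ S ∈ (badSets n).filter (fun S => (S.card : ℝ) ≤ δ * N), x ^ S.card :=
          Finset.sum_le_sum hsmall_bound
      _ ≤ ∑ S ∈ Finset.univ.erase (∅ : Finset (Fin n)), x ^ S.card :=
          Finset.sum_le_sum_of_subset_of_nonneg hsub (fun S _ _ => pow_nonneg hx0 _)
      _ = (x + 1) ^ n - 1 := herase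
      _ ≤ Real.exp (N * x) - 1 := by
          have h4 : (x + 1) ^ n ≤ (Real.exp x) ^ n :=
            pow_le_pow_left₀ (by linarith) (by linarith [Real.add_one_le_exp x]) n
          rw [← Real.exp_nat_mul, ← hNdef] at h4
          linarith
      _ = Real.exp (Real.exp (-(ω/2) * L)) - 1 := by rw [hNx]
  have bound2 : ∑ S ∈ (badSets n).filter (fun S => ¬ ((S.card : ℝ) ≤ δ * N)),
      (1 - c) ^ (S.card * (n - S.card)) ≤ 2 ^ n * t := by
    calc ∑ S ∈ (badSets n).filter (fun S => ¬ ((S.card : ℝ) ≤ δ * N)),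
        (1 - c) ^ (S.card * (n - S.card))
        ≤ ∑ _S ∈ (badSets n).filter (fun S => ¬ ((S.card : ℝ) ≤ δ * N)), t :=
          Finset.sum_le_sum hlarge_bound
      _ = ((badSets n).filter (fun S => ¬ ((S.card : ℝ) ≤ δ * N))).card * t := by
          rw [Finset.sum_const, nsmul_eq_mul]
      _ ≤ 2 ^ n * t := by
          refine mul_le_mul_of_nonneg_right ?_ ht0
          have hcard : ((badSets n).filter (fun S => ¬ ((S.card : ℝ) ≤ δ * N))).card ≤ 2 ^ n := by
            refine le_trans (Finset.card_le_univ _) ?_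
            simp [Finset.card_univ, Fintype.card_finset]
          exact_mod_cast hcard
  linarith

lemma tendsto_R (ω : ℝ) (hω : 0 < ω) :
    Tendsto (fun n : ℕ => ∑ S ∈ badSets n,
      (1 - (1 + ω) * Real.log n / n) ^ (S.card * (n - S.card))) atTop (nhds 0) := by
  have hlog : Tendsto (fun n : ℕ => Real.log n) atTop atTop :=
    Real.tendsto_log_atTop.comp tendsto_natCast_atTop_atTop
  -- c → 0
  have hcto : Tendsto (fun n : ℕ => (1 + ω) * Real.log n / n) atTop (nhds 0) := by
    have h0 : Tendsto (fun x : ℝ => Real.log x / x) atTop (nhds 0) :=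
      Real.isLittleO_log_id_atTop.tendsto_div_nhds_zero
    have h1 : Tendsto (fun n : ℕ => Real.log n / n) atTop (nhds 0) :=
      h0.comp tendsto_natCast_atTop_atTop
    have h2 := h1.const_mul (1 + ω)
    rw [mul_zero] at h2
    refine h2.congr fun n => ?_
    ring
  have hc1 : ∀ᶠ n : ℕ in atTop, (1 + ω) * Real.log n / n ≤ 1 :=
    hcto.eventually_le_const one_pos
  -- first bound term tends to 0
  have hT1 : Tendsto (fun n : ℕ => Real.exp (Real.exp (-(ω/2) * Real.log n)) - 1)
      atTop (nhds 0) := by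
    have i1 : Tendsto (fun n : ℕ => -(ω/2) * Real.log n) atTop atBot :=
      hlog.const_mul_atTop_of_neg (by linarith)
    have i2 : Tendsto (fun n : ℕ => Real.exp (-(ω/2) * Real.log n)) atTop (nhds 0) :=
      Real.tendsto_exp_atBot.comp i1
    have i3 : Tendsto (fun n : ℕ => Real.exp (Real.exp (-(ω/2) * Real.log n)))
        atTop (nhds 1) := by
      have := (Real.continuous_exp.tendsto 0).comp i2
      simpa [Function.comp_def] using this
    simpa using i3.sub_const 1
  -- second bound term tends to 0
  have hT2 : Tendsto (fun n : ℕ => (2:ℝ) ^ n * Real.exp (-(ω/4) * (n * Real.log n)))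
      atTop (nhds 0) := by
    have hexp : Tendsto (fun n : ℕ => Real.exp (-(n:ℝ))) atTop (nhds 0) :=
      Real.tendsto_exp_atBot.comp (tendsto_neg_atTop_atBot.comp tendsto_natCast_atTop_atTop)
    refine tendsto_of_tendsto_of_tendsto_of_le_of_le' tendsto_const_nhds hexp
      (Eventually.of_forall fun n => by positivity) ?_
    have hev : ∀ᶠ n : ℕ in atTop, Real.log 2 + 1 ≤ (ω/4) * Real.log n :=
      (hlog.const_mul_atTop (by positivity : (0:ℝ) < ω/4)).eventually_ge_atTop _
    filter_upwards [hev] with n hn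
    have h2n : (2:ℝ) ^ n = Real.exp (n * Real.log 2) := by
      rw [Real.exp_nat_mul, Real.exp_log two_pos]
    rw [h2n, ← Real.exp_add, Real.exp_le_exp]
    have hn0 : (0:ℝ) ≤ n := Nat.cast_nonneg n
    nlinarith
  have hB := hT1.add hT2
  rw [add_zero] at hB
  refine tendsto_of_tendsto_of_tendsto_of_le_of_le' tendsto_const_nhds hB ?_ ?_
  · filter_upwards [hc1] with n hn
    refine Finset.sum_nonneg fun S _ => pow_nonneg (by linarith) _
  · filter_upwards [hc1, eventually_ge_atTop 2] with n h1 h2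
    exact R_le ω hω n h2 h1


/-- Probability that `G(n, ε)` is connected. -/
def connProb (n : ℕ) (ε : ℝ≥0∞) (hε : ε ≤ 1) : ℝ≥0∞ :=
  gnp n ε hε {ω | (graphOf ω).Connected}

/-- Erdős–Rényi connectivity threshold: if ε > (1+ω)·ln n / n for a fixed
ω > 0, then G(n, ε) is connected with probability tending to 1. -/
theorem stmt12 (ω : ℝ) (hω : 0 < ω) (ε : ℕ → ℝ≥0∞) (hε : ∀ n, ε n ≤ 1)
    (hlb : ∀ n : ℕ, ENNReal.ofReal ((1 + ω) * Real.log n / n) < ε n) :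
    Tendsto (fun n => connProb n (ε n) (hε n)) atTop (nhds 1) := by
  classical
  have key : Tendsto (fun n => gnp n (ε n) (hε n) {ω' | ¬ (graphOf ω').Connected})
      atTop (nhds 0) := by
    have hofR : Tendsto (fun n : ℕ => ENNReal.ofReal (∑ S ∈ badSets n,
        (1 - (1 + ω) * Real.log n / n) ^ (S.card * (n - S.card)))) atTop (nhds 0) := by
      have h := ENNReal.tendsto_ofReal (tendsto_R ω hω)
      simpa using h
    refine tendsto_of_tendsto_of_tendsto_of_le_of_le' tendsto_const_nhds hofR
      (Eventually.of_forall fun n => zero_le) ?_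
    filter_upwards [eventually_ge_atTop 1] with n hn
    refine gnp_not_conn_le hn (ε n) (hε n) _ ?_ (hlb n)
    exact div_nonneg (mul_nonneg (by linarith) (Real.log_nonneg (by exact_mod_cast hn)))
      (Nat.cast_nonneg n)
  have hconn : ∀ n, connProb n (ε n) (hε n)
      = 1 - gnp n (ε n) (hε n) {ω' | ¬ (graphOf ω').Connected} := by
    intro n
    rw [connProb]
    have hcompl : {ω' : EdgeSlots n → Bool | (graphOf ω').Connected}
        = {ω' | ¬ (graphOf ω').Connected}ᶜ := by
      ext ω'; simp
    rw [hcompl, prob_compl_eq_one_sub (meas_all _)]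
  simp_rw [hconn]
  have hfin := ((ENNReal.continuous_sub_left one_ne_top).tendsto 0).comp key
  simpa [Function.comp_def] using hfin

end
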